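/- Let A be a finite type, let F = FreeGroup A, and let H be a nontrivial finitely generated subgroup of F that is cyclically reduced with respect to the basis A. If K ≤ H is a subgroup of finite index in H, then K is cyclically reduced as well: for every nonempty word t : List (A × Bool) there exists k ∈ K with k ≠ 1 such that t is not a prefix of FreeGroup.toWord k. -/

import Mathlib

/-- A subgroup `H` of a free group is cyclically reduced (w.r.t. the basis) if the
nontrivial elements of `H` have no common nonempty prefix. -/
def CyclicallyReducedSubgroup {A : Type*} [DecidableEq A] (H : Subgroup (FreeGroup A)) : Prop :=
  ∀ t : List (A × Bool), t ≠ [] → ∃ h ∈ H, h ≠ 1 ∧ ¬ (t <+: FreeGroup.toWord h)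

namespace CRaux

variable {A : Type*} [DecidableEq A]

/-- The "no cancellation" relation on letters. -/
def R (a b : A × Bool) : Prop := ¬(a.1 = b.1 ∧ a.2 = !b.2)

lemma reduce_eq_self_of_chain' {L : List (A × Bool)} (h : List.IsChain R L) :
    FreeGroup.reduce L = L := by
  induction L with
  | nil => rfl
  | cons x L ih =>
    rw [FreeGroup.reduce.cons, ih h.tail]
    cases L with
    | nil => rfl
    | cons hd tl =>
      have hr : R x hd := (List.isChain_cons_cons.1 h).1
      dsimp only
      rw [if_neg hr]

lemma chain'_of_reduce_eq_self : ∀ {L : List (A × Bool)},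
    FreeGroup.reduce L = L → List.IsChain R L := by
  intro L
  induction L with
  | nil => intro _; exact List.isChain_nil
  | cons x L ih =>
    intro h
    rw [FreeGroup.reduce.cons] at h
    have hlen : (FreeGroup.reduce L).length ≤ L.length :=
      FreeGroup.Red.length_le (FreeGroup.reduce.red)
    cases hr : FreeGroup.reduce L with
    | nil =>
      rw [hr] at h
      dsimp only at h
      have : L = [] := by injection h with _ h2; exact h2.symm
      subst this
      simp
    | cons hd tl =>
      rw [hr] at h hlen
      dsimp only at h
      by_cases hc : x.1 = hd.1 ∧ x.2 = !hd.2
      · rw [if_pos hc] at h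
        have := congrArg List.length h
        simp at this hlen
        omega
      · rw [if_neg hc] at h
        have hL : L = hd :: tl := by
          injection h with _ h2
          exact h2.symm
        have : FreeGroup.reduce L = L := by rw [hr, hL]
        have hch := ih this
        rw [hL]
        exact List.isChain_cons_cons.2 ⟨hc, hL ▸ hch⟩

lemma chain'_toWord (g : FreeGroup A) : List.IsChain R g.toWord :=
  chain'_of_reduce_eq_self (FreeGroup.reduce_toWord g)

lemma toWord_mul_of_chain' {g h : FreeGroup A}
    (hc : List.IsChain R (g.toWord ++ h.toWord)) :
    (g * h).toWord = g.toWord ++ h.toWord := by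
  conv_lhs => rw [← FreeGroup.mk_toWord (x := g), ← FreeGroup.mk_toWord (x := h)]
  rw [FreeGroup.mul_mk, FreeGroup.toWord_mk]
  exact reduce_eq_self_of_chain' hc

/-- Case A of the power lemma: if the last letter does not cancel with the first letter,
powers preserve the first and last letters. -/
lemma pow_head_caseA {g : FreeGroup A} {a z : A × Bool}
    (ha : g.toWord.head? = some a) (hz : g.toWord.getLast? = some z)
    (hR : R z a) :
    ∀ n, 1 ≤ n → (g ^ n).toWord.head? = some a ∧ (g ^ n).toWord.getLast? = some z := by
  intro n hn
  induction n with
  | zero => omega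
  | succ m ih =>
    rcases Nat.lt_or_ge m 1 with hm | hm
    · interval_cases m
      simpa using ⟨ha, hz⟩
    · obtain ⟨ihh, ihl⟩ := ih hm
      have hmul : (g ^ (m + 1)).toWord = g.toWord ++ (g ^ m).toWord := by
        rw [pow_succ']
        apply toWord_mul_of_chain'
        rw [List.isChain_append]
        refine ⟨chain'_toWord g, chain'_toWord _, ?_⟩
        intro x hx y hy
        rw [hz, Option.mem_some_iff] at hx
        rw [ihh, Option.mem_some_iff] at hy
        subst hx; subst hy
        exact hR
      have hgne : g.toWord ≠ [] := by
        intro hnil; rw [hnil] at ha; simp at ha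
      have hmne : (g ^ m).toWord ≠ [] := by
        intro hnil; rw [hnil] at ihh; simp at ihh
      constructor
      · rw [hmul, List.head?_append]
        rw [ha]; rfl
      · rw [hmul, List.getLast?_append]
        rw [ihl]; rfl

/-- Powers of a nontrivial element preserve the first and last letter of the reduced word. -/
lemma pow_head : ∀ (N : ℕ) (g : FreeGroup A), g.toWord.length ≤ N → g ≠ 1 →
    ∀ n, 1 ≤ n → (g ^ n).toWord.head? = g.toWord.head? ∧
      (g ^ n).toWord.getLast? = g.toWord.getLast? := by
  intro N
  induction N with
  | zero =>
    intro g hlen hg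
    exfalso
    exact hg (FreeGroup.toWord_eq_nil_iff.1 (List.length_eq_zero_iff.1 (Nat.le_zero.1 hlen)))
  | succ N ih =>
    intro g hlen hg n hn
    have hWne : g.toWord ≠ [] := fun h => hg (FreeGroup.toWord_eq_nil_iff.1 h)
    obtain ⟨a, L1, hW⟩ := List.exists_cons_of_ne_nil hWne
    rcases L1.eq_nil_or_concat' with rfl | ⟨M, z, rfl⟩
    · -- g.toWord = [a]
      have ha : g.toWord.head? = some a := by rw [hW]; rfl
      have hz : g.toWord.getLast? = some a := by rw [hW]; rfl
      have hR : R a a := by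
        rintro ⟨-, h2⟩
        simp at h2
      obtain ⟨h1, h2⟩ := pow_head_caseA ha hz hR n hn
      rw [ha, hz]
      exact ⟨h1, h2⟩
    · -- g.toWord = a :: M ++ [z]
      have ha : g.toWord.head? = some a := by rw [hW]; rfl
      have hz : g.toWord.getLast? = some z := by
        rw [hW, show a :: (M ++ [z]) = (a :: M) ++ [z] from rfl]
        exact List.getLast?_concat
      by_cases hR : R z a
      · obtain ⟨h1, h2⟩ := pow_head_caseA ha hz hR n hn
        rw [ha, hz]
        exact ⟨h1, h2⟩
      · -- cancellation case: g = x * g' * x⁻¹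
        have hchain : List.IsChain R g.toWord := chain'_toWord g
        rw [hW] at hchain
        -- M ≠ []
        have hza : z.1 = a.1 ∧ z.2 = !a.2 := not_not.1 hR
        have hMne : M ≠ [] := by
          rintro rfl
          simp only [List.nil_append] at hchain
          have hraz : R a z := (List.isChain_cons_cons.1 hchain).1
          exact hraz ⟨hza.1.symm, by rw [hza.2]; simp⟩
        obtain ⟨m₁, M', hM⟩ := List.exists_cons_of_ne_nil hMne
        -- z = invert a
        have hz2 : z = (a.1, !a.2) := Prod.ext hza.1 hza.2
        set g' : FreeGroup A := FreeGroup.mk M with hg'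
        have hMred : FreeGroup.reduce M = M :=
          reduce_eq_self_of_chain' (hchain.tail.prefix ⟨[z], by simp⟩)
        have hg'W : g'.toWord = M := by rw [hg', FreeGroup.toWord_mk, hMred]
        have hg'ne : g' ≠ 1 := by
          intro h
          rw [h] at hg'W
          exact hMne (by rw [← hg'W, FreeGroup.toWord_one])
        have hg'len : g'.toWord.length ≤ N := by
          rw [hg'W]
          have := congrArg List.length hW
          simp at this
          omega
        obtain ⟨ih1, ih2⟩ := ih g' hg'len hg'ne n hn
        rw [hg'W] at ih1 ih2
        -- decompose g
        have hgdecomp : g = FreeGroup.mk [a] * g' * (FreeGroup.mk [a])⁻¹ := by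
          rw [FreeGroup.inv_mk]
          have : FreeGroup.invRev [a] = [z] := by
            simp [FreeGroup.invRev, hz2]
          rw [this, hg', FreeGroup.mul_mk, FreeGroup.mul_mk]
          rw [← FreeGroup.mk_toWord (x := g), hW]
          exact congrArg FreeGroup.mk (by simp)
        have hconj : ∀ m : ℕ, (FreeGroup.mk [a] * g' * (FreeGroup.mk [a])⁻¹) ^ m
            = FreeGroup.mk [a] * g' ^ m * (FreeGroup.mk [a])⁻¹ := by
          intro m
          induction m with
          | zero => group
          | succ k ihk => rw [pow_succ, pow_succ, ihk]; group
        have hpow : g ^ n = FreeGroup.mk [a] * g' ^ n * (FreeGroup.mk [a])⁻¹ := by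
          rw [hgdecomp, hconj]
        -- first and last letters of g'^n
        have hWne' : (g' ^ n).toWord ≠ [] := by
          intro h
          rw [h] at ih1
          rw [hM] at ih1
          simp at ih1
        obtain ⟨w₁, W', hWdec⟩ := List.exists_cons_of_ne_nil hWne'
        have hw₁ : w₁ = m₁ := by
          rw [hWdec, hM] at ih1
          simpa using ih1
        -- chain conditions at the junctions
        have hRa : R a m₁ := by
          rw [hM] at hchain
          exact (List.isChain_cons_cons.1 hchain).1
        have hMlast : M.getLast? = some (M.getLast hMne) := List.getLast?_eq_getLast _
        have hRz : R (M.getLast hMne) z := by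
          have : List.IsChain R (M ++ [z]) := hchain.tail
          rw [List.isChain_append] at this
          apply this.2.2
          · exact hMlast
          · rfl
        -- compute toWord (g^n)
        have hfin : (g ^ n).toWord = a :: (g' ^ n).toWord ++ [z] := by
          rw [hpow]
          have e1 : (FreeGroup.mk [a] * g' ^ n).toWord = a :: (g' ^ n).toWord := by
            have : (FreeGroup.mk [a] : FreeGroup A).toWord = [a] := by
              rw [FreeGroup.toWord_mk]; rfl
            rw [show (a : A × Bool) :: (g' ^ n).toWord = [a] ++ (g' ^ n).toWord by rfl]
            rw [← this]
            apply toWord_mul_of_chain'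
            rw [this, List.isChain_append]
            refine ⟨List.isChain_singleton a, chain'_toWord _, ?_⟩
            intro x hx y hy
            rw [this] at hx
            rw [show ([a] : List (A × Bool)).getLast? = some a from rfl,
              Option.mem_some_iff] at hx
            rw [ih1, hM, List.head?_cons, Option.mem_some_iff] at hy
            subst hx; subst hy
            exact hRa
          have e2 : ((FreeGroup.mk [a] : FreeGroup A))⁻¹.toWord = [z] := by
            rw [FreeGroup.inv_mk]
            have : FreeGroup.invRev [a] = [z] := by rw [hz2]; rfl
            rw [this, FreeGroup.toWord_mk]
            exact reduce_eq_self_of_chain' (List.isChain_singleton z)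
          calc (FreeGroup.mk [a] * g' ^ n * (FreeGroup.mk [a])⁻¹).toWord
              = (FreeGroup.mk [a] * g' ^ n).toWord ++ (FreeGroup.mk [a])⁻¹.toWord := by
                apply toWord_mul_of_chain'
                rw [e1, e2, List.isChain_append]
                refine ⟨?_, List.isChain_singleton z, ?_⟩
                · rw [← e1]; exact chain'_toWord _
                · intro x hx y hy
                  rw [show ([z] : List (A × Bool)).head? = some z from rfl,
                    Option.mem_some_iff] at hy
                  have : (a :: (g' ^ n).toWord).getLast? = (g' ^ n).toWord.getLast? := by
                    rw [show (a : A × Bool) :: (g' ^ n).toWord = [a] ++ (g' ^ n).toWord by rfl,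
                      List.getLast?_append]
                    rw [ih2, hMlast]
                    rfl
                  rw [this, ih2, hMlast, Option.mem_some_iff] at hx
                  subst hx; subst hy
                  exact hRz
            _ = a :: (g' ^ n).toWord ++ [z] := by rw [e1, e2]
        constructor
        · rw [hfin, ha]; rfl
        · rw [hfin, hz]
          rw [show (a : A × Bool) :: (g' ^ n).toWord ++ [z]
              = (a :: (g' ^ n).toWord) ++ [z] from rfl]
          rw [List.getLast?_concat]

end CRaux

theorem cyclically_reduced_finite_index_subgroup (A : Type*) [Finite A] [DecidableEq A]
    (H : Subgroup (FreeGroup A)) (hFG : H.FG) (hne : H ≠ ⊥)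
    (hcr : CyclicallyReducedSubgroup H)
    (K : Subgroup (FreeGroup A)) (hKH : K ≤ H) (hfi : (K.subgroupOf H).index ≠ 0) :
    ∀ t : List (A × Bool), t ≠ [] → ∃ k ∈ K, k ≠ 1 ∧ ¬ (t <+: FreeGroup.toWord k) := by
  -- Step 1: two nontrivial elements of H with distinct first letters.
  obtain ⟨⟨h₁, h₁H⟩, h₁ne'⟩ := Subgroup.ne_bot_iff_exists_ne_one.1 hne
  have h₁ne : h₁ ≠ 1 := by
    simpa [Subtype.ext_iff] using h₁ne'
  have h₁W : h₁.toWord ≠ [] := fun h => h₁ne (FreeGroup.toWord_eq_nil_iff.1 h)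
  obtain ⟨ℓ₁, T₁, hT₁⟩ := List.exists_cons_of_ne_nil h₁W
  obtain ⟨h₂, h₂H, h₂ne, h₂pre⟩ := hcr [ℓ₁] (by simp)
  have h₂W : h₂.toWord ≠ [] := fun h => h₂ne (FreeGroup.toWord_eq_nil_iff.1 h)
  obtain ⟨ℓ₂, T₂, hT₂⟩ := List.exists_cons_of_ne_nil h₂W
  have hℓne : ℓ₁ ≠ ℓ₂ := by
    intro h
    apply h₂pre
    rw [hT₂, h]
    exact ⟨T₂, rfl⟩
  -- Step 2: given t, pick the h whose first letter differs from t's first letter.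
  intro t htne
  obtain ⟨ℓ, t', rfl⟩ := List.exists_cons_of_ne_nil htne
  have key : ∀ h : FreeGroup A, h ∈ H → h ≠ 1 → h.toWord.head? ≠ some ℓ →
      ∃ k ∈ K, k ≠ 1 ∧ ¬ (ℓ :: t' <+: FreeGroup.toWord k) := by
    intro h hH hne1 hhead
    obtain ⟨n, hn0, -, hnK⟩ :=
      Subgroup.exists_pow_mem_of_index_ne_zero hfi (⟨h, hH⟩ : H)
    have hpowK : h ^ n ∈ K := by
      have : ((⟨h, hH⟩ : H) ^ n : H) ∈ K.subgroupOf H := hnK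
      simpa [Subgroup.mem_subgroupOf] using this
    obtain ⟨hh, -⟩ := CRaux.pow_head h.toWord.length h le_rfl hne1 n hn0
    have hpowne : h ^ n ≠ 1 := by
      intro h1
      rw [h1, FreeGroup.toWord_one] at hh
      have : h.toWord = [] := by
        cases hW : h.toWord with
        | nil => rfl
        | cons x xs => rw [hW] at hh; simp at hh
      exact hne1 (FreeGroup.toWord_eq_nil_iff.1 this)
    refine ⟨h ^ n, hpowK, hpowne, ?_⟩
    rintro ⟨s, hs⟩
    apply hhead
    rw [← hh, ← hs]
    rfl
  by_cases hℓ : ℓ₁ = ℓ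
  · apply key h₂ h₂H h₂ne
    rw [hT₂]
    simp only [List.head?_cons, ne_eq, Option.some.injEq]
    rw [← hℓ]
    exact fun h => hℓne h.symm
  · apply key h₁ h₁H h₁ne
    rw [hT₁]
    simpa using hℓ
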